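/- (Mutual-Exclusive One-Way Bound) For fixed η, ω, α > 0, define g(k) = k²·ω·α/(k·η − 1/2) for real k > 1/(2η). Then g has a unique global minimum on (1/(2η), ∞) at k = 1/η with minimum value 2·α·ω/η² — half of the bidirectional symmetric bound 4·α·ω/η². Moreover, the minimum over integers k > 1/(2η) is attained at ⌈1/η⌉ or ⌊1/η⌋. -/

import Mathlib

private lemma denom_pos {η x : ℝ} (hη : 0 < η) (hx : 1 / (2 * η) < x) :
    0 < x * η - 1 / 2 := by
  have h2 : 0 < 2 * η := by linarith
  have := (div_lt_iff₀ h2).mp hx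
  nlinarith

private lemma g_inc (η ω α a b : ℝ) (hη : 0 < η) (hω : 0 < ω) (hα : 0 < α)
    (ha : 1 / (2 * η) < a) (hab : a ≤ b) (h1 : 1 / η ≤ a) :
    a ^ 2 * ω * α / (a * η - 1 / 2) ≤ b ^ 2 * ω * α / (b * η - 1 / 2) := by
  have hda := denom_pos hη ha
  have hdb := denom_pos hη (lt_of_lt_of_le ha hab)
  rw [div_le_div_iff₀ hda hdb]
  have haη : 1 ≤ a * η := by
    have := (div_le_iff₀ hη).mp h1; linarith
  have hbη : 1 ≤ b * η := by nlinarith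
  have hb0 : 0 < b := lt_of_lt_of_le (by positivity : (0:ℝ) < 1/η) (le_trans h1 hab)
  have ha0 : 0 < a := lt_of_lt_of_le (by positivity) h1
  have h2 : 0 ≤ 2 * a * b * η - a - b := by
    nlinarith [mul_nonneg (sub_nonneg.mpr haη) hb0.le, mul_nonneg (sub_nonneg.mpr hbη) ha0.le]
  have key : 0 ≤ (b - a) * (2 * a * b * η - a - b) :=
    mul_nonneg (sub_nonneg.mpr hab) h2
  nlinarith [mul_nonneg (mul_pos hω hα).le key]

private lemma g_dec (η ω α a b : ℝ) (hη : 0 < η) (hω : 0 < ω) (hα : 0 < α)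
    (ha : 1 / (2 * η) < a) (hab : a ≤ b) (h1 : b ≤ 1 / η) :
    b ^ 2 * ω * α / (b * η - 1 / 2) ≤ a ^ 2 * ω * α / (a * η - 1 / 2) := by
  have hda := denom_pos hη ha
  have hdb := denom_pos hη (lt_of_lt_of_le ha hab)
  rw [div_le_div_iff₀ hdb hda]
  have hbη : b * η ≤ 1 := by
    have := (le_div_iff₀ hη).mp h1; linarith
  have haη : a * η ≤ 1 := by nlinarith
  have ha0 : 0 < a := by nlinarith
  have hb0 : 0 < b := lt_of_lt_of_le ha0 hab
  have h2 : 0 ≤ a + b - 2 * a * b * η := by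
    nlinarith [mul_nonneg (sub_nonneg.mpr haη) hb0.le, mul_nonneg (sub_nonneg.mpr hbη) ha0.le]
  have key : 0 ≤ (b - a) * (a + b - 2 * a * b * η) :=
    mul_nonneg (sub_nonneg.mpr hab) h2
  nlinarith [mul_nonneg (mul_pos hω hα).le key]

theorem mutual_exclusive_bound (η ω α : ℝ) (hη : 0 < η) (hω : 0 < ω)
    (hα : 0 < α)
    (hfloor : 1 / (2 * η) < (⌊1 / η⌋ : ℝ)) :
    ((1 / η) ^ 2 * ω * α / ((1 / η) * η - 1 / 2) = 2 * α * ω / η ^ 2) ∧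
    (∀ k ∈ Set.Ioi (1 / (2 * η)), k ≠ 1 / η →
      2 * α * ω / η ^ 2 < k ^ 2 * ω * α / (k * η - 1 / 2)) ∧
    (∀ n : ℤ, 1 / (2 * η) < (n : ℝ) →
      min ((⌈1 / η⌉ : ℝ) ^ 2 * ω * α / ((⌈1 / η⌉ : ℝ) * η - 1 / 2))
          ((⌊1 / η⌋ : ℝ) ^ 2 * ω * α / ((⌊1 / η⌋ : ℝ) * η - 1 / 2))
        ≤ (n : ℝ) ^ 2 * ω * α / ((n : ℝ) * η - 1 / 2)) := by
  have hηne : η ≠ 0 := hη.ne'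
  have hval : (1 / η) * η - 1 / 2 = 1 / 2 := by
    rw [one_div, inv_mul_cancel₀ hη.ne']; norm_num
  refine ⟨?_, ?_, ?_⟩
  · rw [hval]; field_simp
  · intro k hk hkne
    simp only [Set.mem_Ioi] at hk
    have hd := denom_pos hη hk
    rw [lt_div_iff₀ hd]
    have hkη : k * η ≠ 1 := fun h => hkne (by field_simp; linarith [h])
    have hsq : 0 < (k * η - 1) ^ 2 := by
      have : k * η - 1 ≠ 0 := sub_ne_zero.mpr hkη
      positivity
    have hη2 : (0:ℝ) < η ^ 2 := by positivity
    rw [div_mul_eq_mul_div, div_lt_iff₀ hη2]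
    nlinarith [mul_pos hω hα, mul_pos (mul_pos hω hα) hsq]
  · intro n hn
    have hfl : (⌊1 / η⌋ : ℝ) ≤ 1 / η := Int.floor_le _
    have hcl : (1 / η) ≤ (⌈1 / η⌉ : ℝ) := Int.le_ceil _
    rcases le_or_gt (n : ℝ) (⌊1 / η⌋ : ℝ) with h | h
    · exact le_trans (min_le_right _ _)
        (g_dec η ω α _ _ hη hω hα hn h hfl)
    · have hn' : ⌊1 / η⌋ < n := by exact_mod_cast h
      have hcn : (⌈1 / η⌉ : ℝ) ≤ n := by
        have := Int.ceil_le_floor_add_one (1 / η)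
        have : ⌈1 / η⌉ ≤ n := by omega
        exact_mod_cast this
      have hcdom : 1 / (2 * η) < (⌈1 / η⌉ : ℝ) := lt_of_lt_of_le hfloor (by exact_mod_cast Int.floor_le_ceil _)
      exact le_trans (min_le_left _ _)
        (g_inc η ω α _ _ hη hω hα hcdom hcn hcl)
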